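/- arXiv:1002.1979 — 3 statements merged into one kernel-verified Lean document; each statement's English description precedes it below -/
import Mathlib

section
/- Let γ₀(t) = z₀ + k₁t + √(t/t̂_c)(z_c − z₀ − k₁ t̂_c) and γ₁(t) = z₀ − k₁t + 2√((1−z₀)k₁t). If t* = (1/k₁)(1 + 2√(z₀(1−z₀))) and t̂_c = (1/k₁)(√z₀ + √z_c)², then γ₁(t*) = 1 − z₀ and γ₀(t*) = 1 − z₀. -/
/-- With `γ₀(t) = z₀ + k₁t + √(t/t̂_c)(z_c − z₀ − k₁ t̂_c)` and
`γ₁(t) = z₀ − k₁t + 2√((1−z₀)k₁t)`, if `t* = (1/k₁)(1 + 2√(z₀(1−z₀)))` and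
`t̂_c = (1/k₁)(√z₀ + √z_c)²`, then `γ₁(t*) = 1 − z₀` and `γ₀(t*) = 1 − z₀`. -/
theorem stmt10 (k₁ z₀ zc : ℝ) (hk₁ : 0 < k₁) (hzc : 0 < zc) (hzcz₀ : zc < z₀)
    (hz₀ : z₀ ≤ 1 / 2)
    (tstar thc : ℝ)
    (htstar : tstar = (1 / k₁) * (1 + 2 * Real.sqrt (z₀ * (1 - z₀))))
    (hthc : thc = (1 / k₁) * (Real.sqrt z₀ + Real.sqrt zc) ^ 2)
    (γ₀ γ₁ : ℝ → ℝ)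
    (hγ₀ : ∀ t, γ₀ t = z₀ + k₁ * t + Real.sqrt (t / thc) * (zc - z₀ - k₁ * thc))
    (hγ₁ : ∀ t, γ₁ t = z₀ - k₁ * t + 2 * Real.sqrt ((1 - z₀) * k₁ * t)) :
    γ₁ tstar = 1 - z₀ ∧ γ₀ tstar = 1 - z₀ := by
  have hz₀pos : 0 < z₀ := lt_trans hzc hzcz₀
  set a := Real.sqrt z₀ with hadef
  set b := Real.sqrt zc with hbdef
  set s := Real.sqrt (1 - z₀) with hsdef
  have ha : a ^ 2 = z₀ := Real.sq_sqrt hz₀pos.le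
  have hb : b ^ 2 = zc := Real.sq_sqrt hzc.le
  have hs : s ^ 2 = 1 - z₀ := Real.sq_sqrt (by linarith)
  have ha0 : 0 ≤ a := Real.sqrt_nonneg _
  have hb0 : 0 < b := Real.sqrt_pos.mpr hzc
  have hs0 : 0 ≤ s := Real.sqrt_nonneg _
  have hsqrt_as : Real.sqrt (z₀ * (1 - z₀)) = a * s := Real.sqrt_mul hz₀pos.le _
  have hk1 : k₁ ≠ 0 := ne_of_gt hk₁
  have hkey : 1 + 2 * Real.sqrt (z₀ * (1 - z₀)) = (a + s) ^ 2 := by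
    rw [hsqrt_as]; linear_combination (-1 : ℝ) * ha + (-1 : ℝ) * hs
  have hab : (0:ℝ) < a + b := by positivity
  have htstar' : tstar = 1 / k₁ * (a + s) ^ 2 := by rw [htstar, hkey]
  have h1 : (1 - z₀) * k₁ * tstar = (s * (a + s)) ^ 2 := by
    rw [htstar']; field_simp; linear_combination (-(a + s) ^ 2) * hs
  have h1' : Real.sqrt ((1 - z₀) * k₁ * tstar) = s * (a + s) := by
    rw [h1, Real.sqrt_sq (by positivity)]
  have h2 : tstar / thc = ((a + s) / (a + b)) ^ 2 := by
    rw [htstar', hthc]; field_simp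
  have h2' : Real.sqrt (tstar / thc) = (a + s) / (a + b) := by
    rw [h2, Real.sqrt_sq (by positivity)]
  have h3 : zc - z₀ - k₁ * thc = -2 * a * (a + b) := by
    rw [hthc]; field_simp; linear_combination ha - hb
  constructor
  · rw [hγ₁, h1', htstar']
    field_simp
    linear_combination hs - ha
  · rw [hγ₀, h2', h3, htstar']
    have : (a + s) / (a + b) * (-2 * a * (a + b)) = (a + s) * (-2 * a) := by
      field_simp
    rw [this]
    field_simp
    linear_combination hs - ha
end

section
/- With a(z) = a₀e^{−z/λ} and f(φ) = φ(φ−1), the solution of dφ/dt = −(a₀/λ)φ₀(1−φ₀)e^{−z₀/λ}, φ(0) = φ₀, combined with dz/dt = a₀e^{−z/λ}(2φ(t)−1), z(0) = z₀, satisfies e^{z(t)/λ} − e^{z₀/λ} = (a₀/λ)(𝒫t² + (2φ₀−1)t), where 𝒫 = −(a₀/λ)φ₀(1−φ₀)e^{−z₀/λ}. -/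
/-- With `a(z) = a₀e^{−z/λ}` and `f(φ) = φ(φ−1)`, the linear characteristic value
`φ(t) = 𝒫t + φ₀` with `𝒫 = −(a₀/λ)φ₀(1−φ₀)e^{−z₀/λ}`, combined with
`dz/dt = a₀e^{−z/λ}(2φ(t)−1)`, `z(0) = z₀`, satisfies
`e^{z(t)/λ} − e^{z₀/λ} = (a₀/λ)(𝒫t² + (2φ₀−1)t)`. -/
theorem stmt14 (a₀ lam z₀ φ₀ T : ℝ) (ha₀ : 0 < a₀) (hlam : 0 < lam)
    (hφ₀ : φ₀ ∈ Set.Icc (0 : ℝ) 1) (hT : 0 < T)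
    (P : ℝ) (hP : P = -(a₀ / lam) * φ₀ * (1 - φ₀) * Real.exp (-z₀ / lam))
    (z : ℝ → ℝ) (hz0 : z 0 = z₀)
    (hzode : ∀ t ∈ Set.Icc (0 : ℝ) T,
      HasDerivAt z (a₀ * Real.exp (-(z t) / lam) * (2 * (P * t + φ₀) - 1)) t) :
    ∀ t ∈ Set.Icc (0 : ℝ) T,
      Real.exp (z t / lam) - Real.exp (z₀ / lam) =
        (a₀ / lam) * (P * t ^ 2 + (2 * φ₀ - 1) * t) := by
  set F : ℝ → ℝ := fun t => Real.exp (z t / lam)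
  set G : ℝ → ℝ := fun t => Real.exp (z₀ / lam) + (a₀ / lam) * (P * t ^ 2 + (2 * φ₀ - 1) * t)
  have hF : ∀ t ∈ Set.Icc (0 : ℝ) T,
      HasDerivAt F ((a₀ / lam) * (P * (2 * t) + (2 * φ₀ - 1))) t := by
    intro t ht
    have h1 : HasDerivAt (fun t => z t / lam)
        (a₀ * Real.exp (-(z t) / lam) * (2 * (P * t + φ₀) - 1) / lam) t :=
      (hzode t ht).div_const lam
    have h2 := h1.exp
    convert h2 using 1
    have : Real.exp (z t / lam) * Real.exp (-(z t) / lam) = 1 := by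
      rw [← Real.exp_add]; rw [show z t / lam + -(z t) / lam = 0 by ring, Real.exp_zero]
    calc (a₀ / lam) * (P * (2 * t) + (2 * φ₀ - 1))
        = (Real.exp (z t / lam) * Real.exp (-(z t) / lam)) *
            ((a₀ / lam) * (2 * (P * t + φ₀) - 1)) := by rw [this]; ring
      _ = Real.exp (z t / lam) *
            (a₀ * Real.exp (-(z t) / lam) * (2 * (P * t + φ₀) - 1) / lam) := by ring
  have hG : ∀ t, HasDerivAt G ((a₀ / lam) * (P * (2 * t) + (2 * φ₀ - 1))) t := by
    intro t
    have : HasDerivAt (fun t : ℝ => P * t ^ 2 + (2 * φ₀ - 1) * t)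
        (P * (2 * t) + (2 * φ₀ - 1)) t := by
      have h1 : HasDerivAt (fun t : ℝ => t ^ 2) (2 * t) t := by
        simpa using hasDerivAt_pow 2 t
      have := ((h1.const_mul P).add ((hasDerivAt_id t).const_mul (2 * φ₀ - 1)))
      simpa [mul_comm, Pi.add_def] using this
    exact (this.const_mul (a₀ / lam)).const_add (Real.exp (z₀ / lam))
  have key : ∀ t ∈ Set.Icc (0 : ℝ) T, F t = G t := by
    apply eq_of_has_deriv_right_eq
        (f' := fun t => (a₀ / lam) * (P * (2 * t) + (2 * φ₀ - 1)))
    · intro x hx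
      exact (hF x (Set.mem_Icc_of_Ico hx)).hasDerivWithinAt
    · intro x hx
      exact (hG x).hasDerivWithinAt
    · intro x hx
      exact (hF x hx).continuousAt.continuousWithinAt
    · intro x hx
      exact (hG x).continuousAt.continuousWithinAt
    · simp [F, G, hz0]
  intro t ht
  have := key t ht
  simp only [F, G] at this
  linarith
end

section
/- For t > 0 and z, z₀ ∈ ℝ with parameters a₀, λ > 0, the value φ₀(z,t) = (λ/(2a₀t))( a₀t/λ − 2e^{z₀/λ} + √(4e^{(z+z₀)/λ} + (a₀t/λ)²) ) satisfies the quadratic relation e^{z/λ} − e^{z₀/λ} = (a₀/λ)( −(a₀/λ)φ₀(1−φ₀)e^{−z₀/λ} t² + (2φ₀−1)t ), and φ₀(z_max(t), t) = 1 whenever e^{z_max(t)/λ} = e^{z₀/λ} + (a₀/λ)t. -/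
/-- For `t > 0`, the value
`φ₀(z,t) = (λ/(2a₀t))(a₀t/λ − 2e^{z₀/λ} + √(4e^{(z+z₀)/λ} + (a₀t/λ)²))`
satisfies the quadratic relation
`e^{z/λ} − e^{z₀/λ} = (a₀/λ)(−(a₀/λ)φ₀(1−φ₀)e^{−z₀/λ} t² + (2φ₀−1)t)`,
and `φ₀(z_max(t), t) = 1` whenever `e^{z_max(t)/λ} = e^{z₀/λ} + (a₀/λ)t`. -/
theorem stmt16 (a₀ lam z₀ : ℝ) (ha₀ : 0 < a₀) (hlam : 0 < lam)
    (φ₀ : ℝ → ℝ → ℝ)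
    (hφ₀ : ∀ z t, φ₀ z t = (lam / (2 * a₀ * t)) *
      (a₀ * t / lam - 2 * Real.exp (z₀ / lam) +
        Real.sqrt (4 * Real.exp ((z + z₀) / lam) + (a₀ * t / lam) ^ 2))) :
    ∀ t : ℝ, 0 < t →
      (∀ z : ℝ,
        Real.exp (z / lam) - Real.exp (z₀ / lam) =
          (a₀ / lam) * (-(a₀ / lam) * φ₀ z t * (1 - φ₀ z t) *
            Real.exp (-z₀ / lam) * t ^ 2 + (2 * φ₀ z t - 1) * t)) ∧
      (∀ zmax : ℝ, Real.exp (zmax / lam) = Real.exp (z₀ / lam) + (a₀ / lam) * t →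
        φ₀ zmax t = 1) := by
  intro t ht
  have hEpos : 0 < Real.exp (z₀ / lam) := Real.exp_pos _
  constructor
  · intro z
    rw [hφ₀]
    have hX : Real.exp ((z + z₀) / lam) = Real.exp (z / lam) * Real.exp (z₀ / lam) := by
      rw [← Real.exp_add]; ring_nf
    have hEinv : Real.exp (-z₀ / lam) = (Real.exp (z₀ / lam))⁻¹ := by
      rw [← Real.exp_neg]; ring_nf
    set R := Real.sqrt (4 * Real.exp ((z + z₀) / lam) + (a₀ * t / lam) ^ 2) with hRdef
    have hR2 : R ^ 2 = 4 * Real.exp (z / lam) * Real.exp (z₀ / lam) + (a₀ * t / lam) ^ 2 := by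
      rw [hRdef, Real.sq_sqrt (by positivity), hX]; ring
    rw [hEinv]
    field_simp
    have hinv : lam * lam⁻¹ = 1 := mul_inv_cancel₀ hlam.ne'
    linear_combination (-lam^2) * hR2 +
      (-a₀^2*t^2*(1+lam*lam⁻¹)) * hinv
  · intro zmax hz
    rw [hφ₀]
    have hX : Real.exp ((zmax + z₀) / lam) = Real.exp (zmax / lam) * Real.exp (z₀ / lam) := by
      rw [← Real.exp_add]; ring_nf
    have hsq : 4 * Real.exp ((zmax + z₀) / lam) + (a₀ * t / lam) ^ 2
        = (2 * Real.exp (z₀ / lam) + a₀ * t / lam) ^ 2 := by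
      rw [hX, hz]; ring
    rw [hsq, Real.sqrt_sq (by positivity)]
    field_simp
    ring
end
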